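/- The proportion of integers n in the interval [p₁⋯p_r, p₁⋯p_r·p_{r+1}) with ω(n) ≤ t (for a fixed t) tends to 0 as r → ∞; i.e., lim_{r→∞} N_r(t) / (p₁⋯p_r·p_{r+1} − p₁⋯p_r) = 0, where N_r(t) is the count of such n. -/

import Mathlib

/-- The product of the first r primes. -/
noncomputable def primorialProd (r : ℕ) : ℕ := ∏ i ∈ Finset.range r, Nat.nth Nat.Prime i

/-- N_r(t): the number of n in [p₁⋯p_r, p₁⋯p_r·p_{r+1}) with 1 ≤ ω(n) ≤ t. -/
noncomputable def Nrt (r t : ℕ) : ℕ :=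
  ((Finset.Ico (primorialProd r) (primorialProd r * Nat.nth Nat.Prime r)).filter
    (fun n => 1 ≤ n.primeFactors.card ∧ n.primeFactors.card ≤ t)).card

namespace Stmt19Aux

open Finset Filter

local notation "pp" => Nat.nth Nat.Prime

lemma pp_prime (i : ℕ) : (pp i).Prime := Nat.prime_nth_prime i

lemma pp_pos (i : ℕ) : 0 < pp i := (pp_prime i).pos

lemma pp_two_le (i : ℕ) : 2 ≤ pp i := (pp_prime i).two_le

lemma pp_inj : Function.Injective pp := Nat.nth_injective Nat.infinite_setOf_prime

lemma primorial_pos (r : ℕ) : 0 < primorialProd r :=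
  Finset.prod_pos fun i _ => pp_pos i

lemma modEq_primorial {a b : ℕ} (r : ℕ) (h : ∀ i < r, a ≡ b [MOD pp i]) :
    a ≡ b [MOD primorialProd r] := by
  induction r with
  | zero => simp [primorialProd, Nat.modEq_one]
  | succ r ih =>
    rw [primorialProd, Finset.prod_range_succ]
    have hcop : (∏ i ∈ Finset.range r, pp i).Coprime (pp r) := by
      apply Nat.Coprime.prod_left
      intro i hi
      exact (Nat.coprime_primes (pp_prime i) (pp_prime r)).mpr
        (fun he => absurd (pp_inj he) (Finset.mem_range.mp hi).ne)
    exact (Nat.modEq_and_modEq_iff_modEq_mul hcop).mp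
      ⟨ih (fun i hi => h i (hi.trans (Nat.lt_succ_self r))), h r (Nat.lt_succ_self r)⟩

/-- The set of residue tuples mod the first `r` primes with at most `t` zeros. -/
noncomputable def Bset (r t : ℕ) : Finset (Fin r → ℕ) :=
  (Fintype.piFinset (fun i : Fin r => Finset.range (pp i))).filter
    (fun x => (Finset.univ.filter fun i => x i = 0).card ≤ t)

lemma Nrt_le (r t : ℕ) : Nrt r t ≤ (pp r - 1) * (Bset r t).card := by
  classical
  rw [show (pp r - 1) * (Bset r t).card = ((Finset.Ico 1 (pp r)) ×ˢ Bset r t).card by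
    rw [Finset.card_product, Nat.card_Ico]]
  unfold Nrt
  apply Finset.card_le_card_of_injOn
    (fun n : ℕ => ((n / primorialProd r : ℕ), fun i : Fin r => n % pp i))
  · -- maps to
    intro n hn
    simp only [Finset.coe_filter, Set.mem_setOf_eq, Finset.mem_filter, Finset.mem_Ico] at hn
    obtain ⟨⟨hP, hPp⟩, _, hω⟩ := hn
    have hn0 : n ≠ 0 := by
      have := primorial_pos r
      omega
    refine Finset.mem_product.mpr ⟨?_, ?_⟩
    · rw [Finset.mem_Ico]
      refine ⟨(Nat.one_le_div_iff (primorial_pos r)).mpr hP, ?_⟩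
      exact Nat.div_lt_of_lt_mul hPp
    · rw [Bset, Finset.mem_filter]
      constructor
      · exact Fintype.mem_piFinset.mpr fun i => Finset.mem_range.mpr (Nat.mod_lt _ (pp_pos i))
      · refine le_trans ?_ hω
        show (Finset.univ.filter fun i : Fin r => n % pp i = 0).card ≤ n.primeFactors.card
        apply Finset.card_le_card_of_injOn (fun i : Fin r => pp i)
        · intro i hi
          simp only [Finset.coe_filter, Set.mem_setOf_eq, Finset.mem_filter, Finset.mem_univ, true_and] at hi
          exact Nat.mem_primeFactors.mpr ⟨pp_prime i, Nat.dvd_of_mod_eq_zero hi, hn0⟩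
        · intro i _ j _ hij
          exact Fin.val_injective (pp_inj hij)
  · -- injective
    intro n hn n' hn' heq
    have hdiv : n / primorialProd r = n' / primorialProd r := congrArg Prod.fst heq
    have hmods : ∀ i < r, n ≡ n' [MOD pp i] := by
      intro i hi
      exact congrFun (congrArg Prod.snd heq) ⟨i, hi⟩
    have hmod : n % primorialProd r = n' % primorialProd r := modEq_primorial r hmods
    calc n = primorialProd r * (n / primorialProd r) + n % primorialProd r :=
          (Nat.div_add_mod _ _).symm
      _ = primorialProd r * (n' / primorialProd r) + n' % primorialProd r := by
          rw [hdiv, hmod]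
      _ = n' := Nat.div_add_mod _ _

lemma Bset_card_le (r t : ℕ) :
    ((Bset r t).card : ℝ) ≤ 2 ^ t * ∏ i ∈ Finset.range r, ((pp i : ℝ) - 1/2) := by
  classical
  set w : ℕ → ℝ := fun a => if a = 0 then 1/2 else 1 with hw
  have hw_nonneg : ∀ a, 0 ≤ w a := by
    intro a; simp only [hw]; split <;> norm_num
  have key : ((Bset r t).card : ℝ) ≤
      ∑ x ∈ Fintype.piFinset (fun i : Fin r => Finset.range (pp i)),
        2 ^ t * ∏ i, w (x i) := by
    rw [Finset.card_eq_sum_ones, Nat.cast_sum]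
    refine le_trans (Finset.sum_le_sum ?_) (Finset.sum_le_sum_of_subset_of_nonneg
      (Finset.filter_subset _ _) ?_)
    · intro x hx
      simp only [Bset, Finset.mem_filter] at hx
      obtain ⟨-, hz⟩ := hx
      have hprod : ∏ i, w (x i) = (1/2 : ℝ) ^ (Finset.univ.filter fun i => x i = 0).card := by
        rw [← Finset.prod_filter_mul_prod_filter_not Finset.univ (fun i => x i = 0)
          (fun i => w (x i))]
        rw [Finset.prod_eq_pow_card (b := (1/2:ℝ)) (fun i hi => ?_),
          Finset.prod_eq_one (fun i hi => ?_), mul_one]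
        · simp only [Finset.mem_filter, Finset.mem_univ, true_and] at hi
          simp [hw, hi]
        · simp only [Finset.mem_filter, Finset.mem_univ, true_and] at hi
          simp [hw, hi]
      rw [hprod, Nat.cast_one]
      calc (1 : ℝ) = 2 ^ t * (1/2 : ℝ) ^ t := by
            rw [one_div, inv_pow, mul_inv_cancel₀ (by positivity)]
        _ ≤ 2 ^ t * (1/2 : ℝ) ^ (Finset.univ.filter fun i => x i = 0).card := by
            apply mul_le_mul_of_nonneg_left _ (by positivity)
            exact pow_le_pow_of_le_one (by norm_num) (by norm_num) hz
    · intro x _ _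
      have : (0:ℝ) ≤ ∏ i, w (x i) := Finset.prod_nonneg fun i _ => hw_nonneg _
      positivity
  refine key.trans ?_
  rw [← Finset.mul_sum, ← Finset.prod_univ_sum]
  have hps : ∀ i : Fin r, ∑ a ∈ Finset.range (pp i), w a = (pp i : ℝ) - 1/2 := by
    intro i
    have h0 : (0 : ℕ) ∈ Finset.range (pp i) := Finset.mem_range.mpr (pp_pos i)
    rw [← Finset.add_sum_erase _ _ h0]
    have h1 : ∀ a ∈ (Finset.range (pp i)).erase 0, w a = 1 := by
      intro a ha
      have := Finset.ne_of_mem_erase ha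
      simp [hw, this]
    rw [Finset.sum_congr rfl h1, Finset.sum_const, Finset.card_erase_of_mem h0,
      Finset.card_range]
    have h2 : (2:ℕ) ≤ pp i := pp_two_le i
    simp only [hw, if_pos rfl, nsmul_eq_mul]
    rw [Nat.cast_sub (by omega)]
    ring
  rw [Finset.prod_congr rfl (fun i _ => hps i),
    mul_le_mul_iff_right₀ (by positivity : (0:ℝ) < 2 ^ t),
    ← Fin.prod_univ_eq_prod_range (fun i => ((pp i : ℝ) - 1/2))]

lemma sum_one_div_pp_tendsto :
    Tendsto (fun r => ∑ i ∈ Finset.range r, (1 : ℝ) / (pp i)) atTop atTop := by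
  have hnonneg : ∀ i, (0:ℝ) ≤ 1 / (pp i) := fun i => by positivity
  rw [← not_summable_iff_tendsto_nat_atTop_of_nonneg hnonneg]
  intro hsum
  have hbij : Function.Bijective (fun i => (⟨pp i, pp_prime i⟩ : Nat.Primes)) := by
    constructor
    · intro a b hab
      exact pp_inj (congrArg Subtype.val hab)
    · intro q
      have : (q : ℕ) ∈ Set.range (Nat.nth Nat.Prime) := by
        rw [Nat.range_nth_of_infinite Nat.infinite_setOf_prime]
        exact q.2
      obtain ⟨i, hi⟩ := this
      exact ⟨i, Subtype.ext hi⟩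
  apply Nat.Primes.not_summable_one_div
  exact (Equiv.summable_iff (f := fun p : Nat.Primes => (1:ℝ) / ((p:ℕ):ℝ)) (Equiv.ofBijective _ hbij)).mp hsum

lemma g_tendsto (t : ℕ) :
    Tendsto (fun r => (2:ℝ) ^ t * ∏ i ∈ Finset.range r, (1 - 1 / (2 * (pp i : ℝ))))
      atTop (nhds 0) := by
  have hfac_nonneg : ∀ i, (0:ℝ) ≤ 1 - 1 / (2 * (pp i : ℝ)) := by
    intro i
    have h2 : (2:ℝ) ≤ (pp i : ℝ) := by exact_mod_cast pp_two_le i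
    have : 1 / (2 * (pp i : ℝ)) ≤ 1/4 := by
      rw [div_le_div_iff₀ (by positivity) (by norm_num)]
      nlinarith
    linarith
  have hub : ∀ r, ∏ i ∈ Finset.range r, (1 - 1 / (2 * (pp i : ℝ)))
      ≤ Real.exp (-(∑ i ∈ Finset.range r, 1 / (2 * (pp i : ℝ)))) := by
    intro r
    calc ∏ i ∈ Finset.range r, (1 - 1 / (2 * (pp i : ℝ)))
        ≤ ∏ i ∈ Finset.range r, Real.exp (-(1 / (2 * (pp i : ℝ)))) := by
          apply Finset.prod_le_prod (fun i _ => hfac_nonneg i)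
          intro i _
          have := Real.add_one_le_exp (-(1 / (2 * (pp i : ℝ))))
          linarith
      _ = Real.exp (-(∑ i ∈ Finset.range r, 1 / (2 * (pp i : ℝ)))) := by
          rw [← Real.exp_sum, Finset.sum_neg_distrib]
  apply squeeze_zero
    (g := fun r => (2:ℝ) ^ t * Real.exp (-(∑ i ∈ Finset.range r, 1 / (2 * (pp i : ℝ)))))
  · intro r
    have : (0:ℝ) ≤ ∏ i ∈ Finset.range r, (1 - 1 / (2 * (pp i : ℝ))) :=
      Finset.prod_nonneg fun i _ => hfac_nonneg i
    positivity
  · intro r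
    exact mul_le_mul_of_nonneg_left (hub r) (by positivity)
  · rw [show (0:ℝ) = (2:ℝ)^t * 0 by ring]
    apply Filter.Tendsto.const_mul
    apply Real.tendsto_exp_atBot.comp
    apply Filter.tendsto_neg_atTop_atBot.comp
    have heq : (fun r => ∑ i ∈ Finset.range r, 1 / (2 * (pp i : ℝ)))
        = fun r => (1/2 : ℝ) * ∑ i ∈ Finset.range r, (1:ℝ) / (pp i) := by
      funext r
      rw [Finset.mul_sum]
      apply Finset.sum_congr rfl
      intro i _
      rw [one_div, one_div, mul_inv]
      ring
    rw [heq]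
    exact sum_one_div_pp_tendsto.const_mul_atTop (by norm_num)

end Stmt19Aux

/-- For fixed t, N_r(t) / (p₁⋯p_r·p_{r+1} − p₁⋯p_r) → 0 as r → ∞. -/
theorem stmt_19 (t : ℕ) (ht : 0 < t) :
    Filter.Tendsto
      (fun r : ℕ => (Nrt r t : ℝ) /
        ((primorialProd r * Nat.nth Nat.Prime r : ℕ) - (primorialProd r : ℕ) : ℝ))
      Filter.atTop (nhds 0) := by
  open Stmt19Aux in
  apply squeeze_zero
    (g := fun r => (2:ℝ) ^ t * ∏ i ∈ Finset.range r,
      (1 - 1 / (2 * (Nat.nth Nat.Prime i : ℝ))))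
  · intro r
    apply div_nonneg (Nat.cast_nonneg _)
    rw [sub_nonneg]
    exact_mod_cast Nat.le_mul_of_pos_right _ (Stmt19Aux.pp_pos r)
  · intro r
    have hP : (0:ℝ) < primorialProd r := by exact_mod_cast Stmt19Aux.primorial_pos r
    have hpr : (2:ℝ) ≤ (Nat.nth Nat.Prime r : ℝ) := by exact_mod_cast Stmt19Aux.pp_two_le r
    have hL : ((primorialProd r * Nat.nth Nat.Prime r : ℕ) : ℝ) - (primorialProd r : ℕ)
        = (primorialProd r : ℝ) * ((Nat.nth Nat.Prime r : ℝ) - 1) := by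
      push_cast; ring
    rw [hL]
    have hden : (0:ℝ) < (primorialProd r : ℝ) * ((Nat.nth Nat.Prime r : ℝ) - 1) := by
      nlinarith
    rw [div_le_iff₀ hden]
    have h1 : (Nrt r t : ℝ) ≤ ((Nat.nth Nat.Prime r : ℝ) - 1) * ((Stmt19Aux.Bset r t).card) := by
      have h := Stmt19Aux.Nrt_le r t
      have h1le : 1 ≤ Nat.nth Nat.Prime r := (Stmt19Aux.pp_pos r)
      calc (Nrt r t : ℝ) ≤ ((Nat.nth Nat.Prime r - 1) * (Stmt19Aux.Bset r t).card : ℕ) := by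
            exact_mod_cast h
        _ = ((Nat.nth Nat.Prime r : ℝ) - 1) * ((Stmt19Aux.Bset r t).card) := by
            push_cast [Nat.cast_sub h1le]
            ring
    refine h1.trans ?_
    have h2 := Stmt19Aux.Bset_card_le r t
    have hprodP : (primorialProd r : ℝ) = ∏ i ∈ Finset.range r, (Nat.nth Nat.Prime i : ℝ) := by
      rw [primorialProd]; push_cast; ring
    have h3 : (∏ i ∈ Finset.range r, (1 - 1 / (2 * (Nat.nth Nat.Prime i : ℝ))))
        * (primorialProd r : ℝ)
        = ∏ i ∈ Finset.range r, ((Nat.nth Nat.Prime i : ℝ) - 1/2) := by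
      rw [hprodP, ← Finset.prod_mul_distrib]
      apply Finset.prod_congr rfl
      intro i _
      have hpi : (0:ℝ) < (Nat.nth Nat.Prime i : ℝ) := by exact_mod_cast Stmt19Aux.pp_pos i
      field_simp
      try ring
    have hB : (0:ℝ) ≤ ((Stmt19Aux.Bset r t).card : ℝ) := Nat.cast_nonneg _
    calc ((Nat.nth Nat.Prime r : ℝ) - 1) * ((Stmt19Aux.Bset r t).card)
        ≤ ((Nat.nth Nat.Prime r : ℝ) - 1) *
          (2 ^ t * ∏ i ∈ Finset.range r, ((Nat.nth Nat.Prime i : ℝ) - 1/2)) :=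
          mul_le_mul_of_nonneg_left h2 (by linarith)
      _ = 2 ^ t * (∏ i ∈ Finset.range r, (1 - 1 / (2 * (Nat.nth Nat.Prime i : ℝ))))
          * ((primorialProd r : ℝ) * ((Nat.nth Nat.Prime r : ℝ) - 1)) := by
          rw [show (2:ℝ) ^ t * (∏ i ∈ Finset.range r, (1 - 1 / (2 * (Nat.nth Nat.Prime i : ℝ))))
            * ((primorialProd r : ℝ) * ((Nat.nth Nat.Prime r : ℝ) - 1))
            = ((Nat.nth Nat.Prime r : ℝ) - 1) * (2 ^ t *
              ((∏ i ∈ Finset.range r, (1 - 1 / (2 * (Nat.nth Nat.Prime i : ℝ))))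
                * (primorialProd r : ℝ))) by ring, h3]
  · exact Stmt19Aux.g_tendsto t
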